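/- Rayleigh's monotonicity law: if C and C' are conductance matrices on the same node set with C ≤ C' entrywise, then for every pair of nodes u, v, the effective resistances satisfy R_{uv}(C) ≥ R_{uv}(C'). -/
import Mathlib


open Matrix

/-- A consensus matrix: entrywise nonnegative, row-stochastic, irreducible
(for every pair of indices some power has a positive entry), with positive diagonal. -/
def IsConsensus {n : ℕ} (P : Matrix (Fin n) (Fin n) ℝ) : Prop :=
  (∀ i j, 0 ≤ P i j) ∧ (∀ i, (∑ j, P i j) = 1) ∧
  (∀ i j, ∃ k : ℕ, 0 < (P ^ k) i j) ∧ (∀ i, 0 < P i i)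

/-- `mu` is the invariant measure of `P`: strictly positive, sums to `1`,
and is a left fixed vector of `P`. -/
def IsInvMeasure {n : ℕ} (P : Matrix (Fin n) (Fin n) ℝ) (mu : Fin n → ℝ) : Prop :=
  (∀ i, 0 < mu i) ∧ (∑ i, mu i) = 1 ∧ (∀ j, (∑ i, mu i * P i j) = mu j)

/-- The time reversal `P* = Π⁻¹ Pᵀ Π` with `Π = diag(mu)`. -/
noncomputable def Pstar {n : ℕ} (P : Matrix (Fin n) (Fin n) ℝ) (mu : Fin n → ℝ) :
    Matrix (Fin n) (Fin n) ℝ :=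
  Matrix.diagonal (fun i => (mu i)⁻¹) * Pᵀ * Matrix.diagonal mu

/-- The graph Laplacian `L(C) = diag(C 𝟙) − C`. -/
def lap {n : ℕ} (C : Matrix (Fin n) (Fin n) ℝ) : Matrix (Fin n) (Fin n) ℝ :=
  Matrix.diagonal (fun i => ∑ j, C i j) - C

/-- A conductance matrix: symmetric, entrywise nonnegative, irreducible. -/
def IsConductance {n : ℕ} (C : Matrix (Fin n) (Fin n) ℝ) : Prop :=
  Cᵀ = C ∧ (∀ i j, 0 ≤ C i j) ∧ (∀ i j, ∃ k : ℕ, 0 < (C ^ k) i j)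

/-- The effective resistance between `a` and `b`: `v a - v b` for a solution `v`
of `L(C) v = e_a - e_b` (junk value `0` if no solution exists). -/
noncomputable def effRes {n : ℕ} (C : Matrix (Fin n) (Fin n) ℝ) (a b : Fin n) : ℝ :=
  open Classical in
  if h : ∃ v : Fin n → ℝ, lap C *ᵥ v = Pi.single a 1 - Pi.single b 1 then
    h.choose a - h.choose b
  else 0

/-- The average effective resistance `(1/(2 n²)) Σ_{u,v} R_{uv}(C)`. -/
noncomputable def avgRes {n : ℕ} (C : Matrix (Fin n) (Fin n) ℝ) : ℝ :=
  (1 / (2 * (n : ℝ) ^ 2)) * ∑ u, ∑ v, effRes C u v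

/-- The unit-conductance matrix of the undirected graph associated with `P`:
edge `{u,v}` iff `P u v ≠ 0` or `P v u ≠ 0`. -/
noncomputable def adjMat {n : ℕ} (P : Matrix (Fin n) (Fin n) ℝ) : Matrix (Fin n) (Fin n) ℝ :=
  Matrix.of fun i j => if i ≠ j ∧ (P i j ≠ 0 ∨ P j i ≠ 0) then (1 : ℝ) else 0

/-- The LQ cost `J(P) = (1/n) Σ_{t≥0} ‖P^t − 𝟙 muᵀ‖_F²`. -/
noncomputable def LQcost {n : ℕ} (P : Matrix (Fin n) (Fin n) ℝ) (mu : Fin n → ℝ) : ℝ :=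
  (1 / (n : ℝ)) *
    ∑' t : ℕ, ∑ i, ∑ j,
      ((P ^ t - Matrix.vecMulVec (fun _ => 1) mu : Matrix (Fin n) (Fin n) ℝ) i j) ^ 2

/-- The weighted LQ cost `J_w(P)`. -/
noncomputable def LQcostW {n : ℕ} (P : Matrix (Fin n) (Fin n) ℝ) (mu : Fin n → ℝ) : ℝ :=
  ∑' t : ℕ, Matrix.trace ((1 - Matrix.vecMulVec mu (fun _ => 1)) * Pᵀ ^ t *
    Matrix.diagonal mu * P ^ t * (1 - Matrix.vecMulVec (fun _ => 1) mu))

/-- The Green matrix `G(P) = Σ_{t≥0} (P^t − 𝟙 muᵀ)`. -/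
noncomputable def Green {n : ℕ} (P : Matrix (Fin n) (Fin n) ℝ) (mu : Fin n → ℝ) :
    Matrix (Fin n) (Fin n) ℝ :=
  ∑' t : ℕ, (P ^ t - Matrix.vecMulVec (fun _ => 1) mu)

/-- Out-degree (excluding self-loops) of node `i` in the directed graph of `P`. -/
noncomputable def outDeg {n : ℕ} (P : Matrix (Fin n) (Fin n) ℝ) (i : Fin n) : ℕ :=
  (Finset.univ.filter fun j => j ≠ i ∧ P i j ≠ 0).card

/-- In-degree (excluding self-loops) of node `j` in the directed graph of `P`. -/
noncomputable def inDeg {n : ℕ} (P : Matrix (Fin n) (Fin n) ℝ) (j : Fin n) : ℕ :=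
  (Finset.univ.filter fun i => i ≠ j ∧ P i j ≠ 0).card

lemma lap_transpose {n : ℕ} (C : Matrix (Fin n) (Fin n) ℝ) (h : Cᵀ = C) :
    (lap C)ᵀ = lap C := by
  simp [lap, transpose_sub, diagonal_transpose, h]

lemma lap_sub {n : ℕ} (C C' : Matrix (Fin n) (Fin n) ℝ) :
    lap (C' - C) = lap C' - lap C := by
  ext i j
  simp [lap, Matrix.sub_apply, Matrix.diagonal, Finset.sum_sub_distrib]
  split <;> ring

lemma mulVec_lap {n : ℕ} (D : Matrix (Fin n) (Fin n) ℝ) (y : Fin n → ℝ) (i : Fin n) :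
    (lap D *ᵥ y) i = ∑ j, D i j * (y i - y j) := by
  simp only [lap, mulVec, dotProduct, Matrix.sub_apply, Matrix.diagonal_apply, sub_mul,
    ite_mul, zero_mul, Finset.sum_sub_distrib, Finset.sum_ite_eq, Finset.mem_univ, if_true,
    mul_sub, ← Finset.sum_mul]

lemma quad_form {n : ℕ} (D : Matrix (Fin n) (Fin n) ℝ) (hsym : Dᵀ = D)
    (y : Fin n → ℝ) :
    y ⬝ᵥ (lap D *ᵥ y) = (1/2) * ∑ i, ∑ j, D i j * (y i - y j)^2 := by
  have hs : ∀ i j, D j i = D i j := fun i j => by conv_lhs => rw [← hsym, transpose_apply]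
  have hq : y ⬝ᵥ (lap D *ᵥ y) = ∑ i, ∑ j, D i j * y i * (y i - y j) := by
    simp only [dotProduct, mulVec_lap, Finset.mul_sum]
    exact Finset.sum_congr rfl fun i _ => Finset.sum_congr rfl fun j _ => by ring
  have hswap : ∑ i, ∑ j, D i j * y j * (y i - y j)
      = ∑ i, ∑ j, D i j * y i * (y j - y i) := by
    rw [Finset.sum_comm]
    exact Finset.sum_congr rfl fun i _ => Finset.sum_congr rfl fun j _ => by rw [hs]
  have hS : ∑ i, ∑ j, D i j * (y i - y j)^2
      = ∑ i, ∑ j, D i j * y i * (y i - y j) - ∑ i, ∑ j, D i j * y j * (y i - y j) := by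
    rw [← Finset.sum_sub_distrib]
    refine Finset.sum_congr rfl fun i _ => ?_
    rw [← Finset.sum_sub_distrib]
    exact Finset.sum_congr rfl fun j _ => by ring
  have hneg : ∑ i, ∑ j, D i j * y i * (y j - y i)
      = - ∑ i, ∑ j, D i j * y i * (y i - y j) := by
    rw [← Finset.sum_neg_distrib]
    refine Finset.sum_congr rfl fun i _ => ?_
    rw [← Finset.sum_neg_distrib]
    exact Finset.sum_congr rfl fun j _ => by ring
  rw [hq, hS, hswap, hneg]; ring

lemma quad_nonneg {n : ℕ} (D : Matrix (Fin n) (Fin n) ℝ) (hsym : Dᵀ = D)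
    (hpos : ∀ i j, 0 ≤ D i j) (y : Fin n → ℝ) : 0 ≤ y ⬝ᵥ (lap D *ᵥ y) := by
  rw [quad_form D hsym y]
  have : 0 ≤ ∑ i, ∑ j, D i j * (y i - y j)^2 :=
    Finset.sum_nonneg fun i _ => Finset.sum_nonneg fun j _ =>
      mul_nonneg (hpos i j) (sq_nonneg _)
  linarith

lemma pow_entry_nonneg {n : ℕ} (C : Matrix (Fin n) (Fin n) ℝ)
    (h : ∀ i j, 0 ≤ C i j) : ∀ k i j, 0 ≤ (C ^ k) i j := by
  intro k
  induction k with
  | zero => intro i j; by_cases hij : i = j <;> simp [pow_zero, Matrix.one_apply, hij]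
  | succ m ih =>
    intro i j
    rw [pow_succ, Matrix.mul_apply]
    exact Finset.sum_nonneg fun l _ => mul_nonneg (ih i l) (h l j)

lemma connected_const {n : ℕ} (C : Matrix (Fin n) (Fin n) ℝ)
    (hnn : ∀ i j, 0 ≤ C i j) (hirr : ∀ i j, ∃ k : ℕ, 0 < (C ^ k) i j)
    (y : Fin n → ℝ) (h0 : ∀ i j, C i j ≠ 0 → y i = y j) : ∀ i j, y i = y j := by
  have key : ∀ k i j, 0 < (C ^ k) i j → y i = y j := by
    intro k
    induction k with
    | zero =>
      intro i j hpos
      by_cases hij : i = j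
      · rw [hij]
      · simp [pow_zero, Matrix.one_apply, hij] at hpos
    | succ m ih =>
      intro i j hpos
      rw [pow_succ', Matrix.mul_apply] at hpos
      obtain ⟨l, -, hl⟩ := Finset.exists_lt_of_sum_lt (by simpa using hpos :
        ∑ _l : Fin n, (0:ℝ) < ∑ l, C i l * (C ^ m) l j)
      have h1 : C i l ≠ 0 := by
        intro h; rw [h, zero_mul] at hl; exact absurd hl (lt_irrefl 0)
      have h2 : 0 < (C ^ m) l j := by
        rcases lt_or_eq_of_le (pow_entry_nonneg C hnn m l j) with h | h
        · exact h
        · rw [← h, mul_zero] at hl; exact absurd hl (lt_irrefl 0)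
      exact (h0 i l h1).trans (ih l j h2)
  intro i j
  obtain ⟨k, hk⟩ := hirr i j
  exact key k i j hk

noncomputable def sumF (n : ℕ) : (Fin n → ℝ) →ₗ[ℝ] ℝ where
  toFun y := ∑ i, y i
  map_add' x y := by simp [Finset.sum_add_distrib]
  map_smul' c x := by simp [Finset.mul_sum]

lemma exists_sol {n : ℕ} (C : Matrix (Fin n) (Fin n) ℝ) (hC : IsConductance C)
    (a b : Fin n) : ∃ v : Fin n → ℝ, lap C *ᵥ v = Pi.single a 1 - Pi.single b 1 := by
  obtain ⟨hsym, hnn, hirr⟩ := hC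
  have hs : ∀ i j, C j i = C i j := fun i j => by
    conv_lhs => rw [← hsym, transpose_apply]
  set L := (lap C).mulVecLin with hL
  -- kernel of L is the span of the constant vector
  have hone : (fun _ => (1:ℝ)) ∈ LinearMap.ker L := by
    rw [LinearMap.mem_ker]
    funext i
    simp [hL, mulVec_lap]
  have hker : LinearMap.ker L = Submodule.span ℝ {fun _ => (1:ℝ)} := by
    apply le_antisymm
    · intro y hy
      rw [LinearMap.mem_ker] at hy
      have hq : y ⬝ᵥ (lap C *ᵥ y) = 0 := by
        rw [show lap C *ᵥ y = L y from rfl, hy]; simp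
      rw [quad_form C hsym y] at hq
      have hterm : ∀ i j, C i j * (y i - y j)^2 = 0 := by
        have h1 : ∑ i, ∑ j, C i j * (y i - y j)^2 = 0 := by linarith
        have h2 := (Finset.sum_eq_zero_iff_of_nonneg (fun i _ =>
          Finset.sum_nonneg fun j _ => mul_nonneg (hnn i j) (sq_nonneg _))).mp h1
        intro i j
        have h3 := (Finset.sum_eq_zero_iff_of_nonneg (fun j _ =>
          mul_nonneg (hnn i j) (sq_nonneg _))).mp (h2 i (Finset.mem_univ i))
        exact h3 j (Finset.mem_univ j)
      have h0 : ∀ i j, C i j ≠ 0 → y i = y j := by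
        intro i j hij
        have := hterm i j
        have h4 : (y i - y j)^2 = 0 := by
          rcases mul_eq_zero.mp this with h | h
          · exact absurd h hij
          · exact h
        have := sq_eq_zero_iff.mp h4
        linarith
      have hconst := connected_const C hnn hirr y h0
      have : y = (y a) • (fun _ => (1:ℝ)) := by
        funext i; simp [hconst i a]
      rw [this]
      exact Submodule.smul_mem _ _ (Submodule.mem_span_singleton_self _)
    · rw [Submodule.span_le]
      intro z hz
      rw [Set.mem_singleton_iff] at hz
      rw [hz]
      exact hone
  have hn1 : (fun _ => (1:ℝ)) ≠ (0 : Fin n → ℝ) := by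
    intro h
    have := congrFun h a
    simp at this
  have hkerrank : Module.finrank ℝ (LinearMap.ker L) = 1 := by
    rw [hker]
    exact finrank_span_singleton hn1
  -- range of L is contained in ker of sumF
  have hrange_le : LinearMap.range L ≤ LinearMap.ker (sumF n) := by
    rintro x ⟨v, rfl⟩
    rw [LinearMap.mem_ker]
    show ∑ i, (lap C *ᵥ v) i = 0
    simp only [mulVec_lap]
    have hswap : ∑ i, ∑ j, C i j * (v i - v j) = ∑ i, ∑ j, C i j * (v j - v i) := by
      rw [Finset.sum_comm]
      exact Finset.sum_congr rfl fun i _ => Finset.sum_congr rfl fun j _ => by rw [hs]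
    have : (2:ℝ) * ∑ i, ∑ j, C i j * (v i - v j) = 0 := by
      rw [two_mul]
      nth_rewrite 2 [hswap]
      rw [← Finset.sum_add_distrib]
      refine Finset.sum_eq_zero fun i _ => ?_
      rw [← Finset.sum_add_distrib]
      exact Finset.sum_eq_zero fun j _ => by ring
    linarith
  -- sumF is surjective (n ≥ 1 since a : Fin n)
  have hsum_range : LinearMap.range (sumF n) = ⊤ := by
    rw [LinearMap.range_eq_top]
    intro c
    refine ⟨fun _ => c / n, ?_⟩
    show ∑ _i : Fin n, c / n = c
    rw [Finset.sum_const, Finset.card_univ, Fintype.card_fin, nsmul_eq_mul]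
    field_simp
    have : (n:ℝ) ≠ 0 := Nat.cast_ne_zero.mpr (Nat.pos_of_ne_zero (by
      rintro rfl; exact absurd a.2 (by simp))).ne'
    field_simp
  have hrankL := LinearMap.finrank_range_add_finrank_ker L
  have hrankF := LinearMap.finrank_range_add_finrank_ker (sumF n)
  rw [hkerrank] at hrankL
  rw [hsum_range, finrank_top] at hrankF
  simp only [Module.finrank_pi, Fintype.card_fin, Module.finrank_self] at hrankL hrankF
  have heq : LinearMap.range L = LinearMap.ker (sumF n) := by
    apply Submodule.eq_of_le_of_finrank_le hrange_le
    omega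
  have hx : (Pi.single a 1 - Pi.single b 1 : Fin n → ℝ) ∈ LinearMap.ker (sumF n) := by
    rw [LinearMap.mem_ker]
    show ∑ i, (Pi.single a 1 - Pi.single b 1 : Fin n → ℝ) i = 0
    simp [Finset.sum_sub_distrib, Pi.single_apply]
  rw [← heq] at hx
  obtain ⟨v, hv⟩ := hx
  exact ⟨v, hv⟩

lemma single_dot {n : ℕ} (u v : Fin n) (y : Fin n → ℝ) :
    (Pi.single u 1 - Pi.single v 1 : Fin n → ℝ) ⬝ᵥ y = y u - y v := by
  simp [dotProduct, Pi.sub_apply, sub_mul, Finset.sum_sub_distrib, Pi.single_apply, ite_mul]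


/-- Rayleigh's monotonicity law: increasing conductances entrywise decreases
every effective resistance. -/
theorem stmt12 {n : ℕ} (C C' : Matrix (Fin n) (Fin n) ℝ)
    (hC : IsConductance C) (hC' : IsConductance C')
    (hle : ∀ i j, C i j ≤ C' i j) :
    ∀ u v : Fin n, effRes C' u v ≤ effRes C u v := by
  intro u v
  obtain ⟨hsymC, hnnC, -⟩ := id hC
  obtain ⟨hsymC', hnnC', -⟩ := id hC'
  have hE : ∃ w : Fin n → ℝ, lap C *ᵥ w = Pi.single u 1 - Pi.single v 1 :=
    exists_sol C hC u v
  have hE' : ∃ w : Fin n → ℝ, lap C' *ᵥ w = Pi.single u 1 - Pi.single v 1 :=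
    exists_sol C' hC' u v
  rw [effRes, effRes, dif_pos hE, dif_pos hE']
  set x : Fin n → ℝ := Pi.single u 1 - Pi.single v 1 with hx
  set w := hE.choose with hw
  set w' := hE'.choose with hw'
  have hw1 : lap C *ᵥ w = x := hE.choose_spec
  have hw1' : lap C' *ᵥ w' = x := hE'.choose_spec
  -- symmetry of lap C: w ⬝ (L w') = (L w) ⬝ w'
  have hsymdot : ∀ (y z : Fin n → ℝ), y ⬝ᵥ (lap C *ᵥ z) = (lap C *ᵥ y) ⬝ᵥ z := by
    intro y z
    rw [dotProduct_mulVec, ← mulVec_transpose, lap_transpose C hsymC]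
  -- D := C' - C is a nonneg symmetric matrix
  have hsymD : (C' - C)ᵀ = C' - C := by rw [transpose_sub, hsymC, hsymC']
  have hnnD : ∀ i j, 0 ≤ (C' - C) i j := fun i j => by
    simp [Matrix.sub_apply]; linarith [hle i j]
  -- w' ⬝ (L w') ≤ w' ⬝ (L' w') = w' ⬝ x
  have h1 : w' ⬝ᵥ (lap C *ᵥ w') ≤ w' ⬝ᵥ x := by
    have := quad_nonneg (C' - C) hsymD hnnD w'
    rw [lap_sub, Matrix.sub_mulVec, dotProduct_sub, hw1'] at this
    linarith
  -- main PSD inequality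
  have h2 : 0 ≤ (w - w') ⬝ᵥ (lap C *ᵥ (w - w')) := quad_nonneg C hsymC hnnC _
  rw [Matrix.mulVec_sub, dotProduct_sub, sub_dotProduct, sub_dotProduct, hw1] at h2
  have h3 : w ⬝ᵥ (lap C *ᵥ w') = x ⬝ᵥ w' := by rw [hsymdot, hw1]
  have h4 : w' ⬝ᵥ x = x ⬝ᵥ w' := dotProduct_comm _ _
  have h5 : w ⬝ᵥ x = x ⬝ᵥ w := dotProduct_comm _ _
  have key : x ⬝ᵥ w' ≤ x ⬝ᵥ w := by linarith
  rw [hx] at key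
  rw [single_dot, single_dot] at key
  exact key
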